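/- Let d ≥ 2 and let (G_i)_{i=1}^{d²} be a GSIC POVM with d² elements on ℂ^d with constants a and b, and assume a > 1/d³ (equivalently b < 1/d³, by a + (d²−1)b = 1/d). Set λ := √(1 − b·d³) = √((d³a − 1)/(d² − 1)). Then the matrices A_i := (1/λ)·(G_i − ((1−λ)/d²)·I) form a COB on ℂ^d: each A_i is Hermitian, tr(A_i A_j) = (1/d)·δ_{ij} for all i, j, and ∑_{i=1}^{d²} A_i = I. -/

import Mathlib

open scoped ComplexOrder

/-- From any GSIC POVM `(G i)_{i=1}^{d²}` on `ℂ^d` with constants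
`a > 1/d³` and `b`, setting `λ := √(1 - b d³) = √((d³a - 1)/(d² - 1))`, the
matrices `A i := (1/λ)(G i - ((1-λ)/d²) I)` form a COB. -/
theorem gsic_to_cob (d : ℕ) (hd : 2 ≤ d)
    (G : Fin (d ^ 2) → Matrix (Fin d) (Fin d) ℂ)
    (hpsd : ∀ i, (G i).PosSemidef)
    (hsum : ∑ i, G i = 1)
    (a b : ℝ)
    (ha : ∀ i, (G i * G i).trace = (a : ℂ))
    (hb : ∀ i j, i ≠ j → (G i * G j).trace = (b : ℂ))
    (ha' : 1 / (d : ℝ) ^ 3 < a)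
    (l : ℝ) (hl : l = Real.sqrt (1 - b * d ^ 3))
    (A : Fin (d ^ 2) → Matrix (Fin d) (Fin d) ℂ)
    (hA : ∀ i, A i = ((l : ℂ))⁻¹ •
      (G i - (((1 - l) / d ^ 2 : ℝ) : ℂ) • (1 : Matrix (Fin d) (Fin d) ℂ))) :
    l = Real.sqrt (((d : ℝ) ^ 3 * a - 1) / ((d : ℝ) ^ 2 - 1)) ∧
    (∀ i, (A i).IsHermitian) ∧
    (∀ i j, (A i * A j).trace = if i = j then (1 / (d : ℂ)) else 0) ∧
    (∑ i, A i = 1) := by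
  have hdR : (2:ℝ) ≤ (d:ℝ) := by exact_mod_cast hd
  have hd0 : (0:ℝ) < (d:ℝ) := by linarith
  have hd0' : (d:ℝ) ≠ 0 := ne_of_gt hd0
  have hd0C : (d:ℂ) ≠ 0 := by exact_mod_cast hd0'
  have hd21 : (1:ℝ) < (d:ℝ)^2 := by nlinarith
  -- trace of each G i
  have htr : ∀ i, (G i).trace = ((a:ℂ) + ((d:ℂ)^2 - 1) * b) := by
    intro i
    have h1 : (G i).trace = (G i * (1 : Matrix (Fin d) (Fin d) ℂ)).trace := by
      rw [mul_one]
    rw [h1, ← hsum, Finset.mul_sum, Matrix.trace_sum,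
      ← Finset.add_sum_erase _ _ (Finset.mem_univ i), ha i,
      Finset.sum_congr rfl
        (fun j hj => hb i j (Finset.ne_of_mem_erase hj).symm),
      Finset.sum_const, Finset.card_erase_of_mem (Finset.mem_univ i),
      Finset.card_univ, Fintype.card_fin, nsmul_eq_mul]
    have h1d : 1 ≤ d^2 := by nlinarith
    push_cast [Nat.cast_sub h1d]
    ring
  have hsumtr : ∑ i, (G i).trace = (d : ℂ) := by
    rw [← Matrix.trace_sum, hsum, Matrix.trace_one]
    simp
  -- key relation
  have keyC : ((d:ℂ)^2) * ((a:ℂ) + ((d:ℂ)^2 - 1) * b) = (d:ℂ) := by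
    have h := hsumtr
    rw [Finset.sum_congr rfl (fun i _ => htr i), Finset.sum_const,
      Finset.card_univ, Fintype.card_fin, nsmul_eq_mul] at h
    push_cast at h
    linear_combination h
  have h2key : ((d:ℝ)^2) * (a + ((d:ℝ)^2 - 1) * b) = (d:ℝ) := by
    have h := keyC
    have h' : ((((d:ℝ)^2) * (a + ((d:ℝ)^2 - 1) * b) : ℝ) : ℂ) = (((d:ℝ) : ℝ) : ℂ) := by
      push_cast
      linear_combination h
    exact_mod_cast h'
  have h4 : (d:ℝ) * (a + ((d:ℝ)^2 - 1) * b) = 1 := by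
    apply mul_left_cancel₀ hd0'
    calc (d:ℝ) * ((d:ℝ) * (a + ((d:ℝ)^2 - 1) * b))
        = (d:ℝ)^2 * (a + ((d:ℝ)^2 - 1) * b) := by ring
      _ = (d:ℝ) := h2key
      _ = (d:ℝ) * 1 := by ring
  have hbd : 1 - b * (d:ℝ)^3 = ((d:ℝ)^3 * a - 1) / ((d:ℝ)^2 - 1) := by
    rw [eq_div_iff (by nlinarith : (d:ℝ)^2 - 1 ≠ 0)]
    linear_combination (-(d:ℝ)^2) * h4
  have hnum : 0 < (d:ℝ)^3 * a - 1 := by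
    have h := mul_lt_mul_of_pos_right ha' (by positivity : (0:ℝ) < (d:ℝ)^3)
    rw [one_div_mul_cancel (by positivity : ((d:ℝ)^3) ≠ 0)] at h
    nlinarith
  have hpos : 0 < 1 - b * (d:ℝ)^3 := by
    rw [hbd]
    exact div_pos hnum (by nlinarith)
  have hl2 : l^2 = 1 - b * (d:ℝ)^3 := by
    rw [hl, Real.sq_sqrt hpos.le]
  have hlpos : 0 < l := by
    rw [hl]; exact Real.sqrt_pos.mpr hpos
  have hl0 : (l:ℂ) ≠ 0 := by exact_mod_cast ne_of_gt hlpos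
  have hl2C : (l:ℂ)^2 = 1 - (b:ℂ) * (d:ℂ)^3 := by
    have h' := congrArg Complex.ofReal hl2
    push_cast at h'
    exact h'
  have h4C : (d:ℂ) * ((a:ℂ) + ((d:ℂ)^2 - 1) * b) = 1 := by
    have h' := congrArg Complex.ofReal h4
    push_cast at h'
    exact h'
  have htr' : ∀ i, (G i).trace = 1 / (d:ℂ) := by
    intro i
    rw [htr i, eq_div_iff hd0C]
    linear_combination h4C
  have hcR : ((((1 - l) / d ^ 2 : ℝ)) : ℂ) = (1 - (l:ℂ)) / (d:ℂ)^2 := by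
    push_cast
    ring
  refine ⟨by rw [hl, hbd], ?_, ?_, ?_⟩
  · intro i
    rw [hA i]
    have hG := (hpsd i).isHermitian
    simp [Matrix.IsHermitian, Matrix.conjTranspose_smul, Matrix.conjTranspose_sub,
      hG.eq, Complex.conj_ofReal, star_inv₀]
  · intro i j
    rw [hA i, hA j]
    set c : ℂ := ((((1 - l) / d ^ 2 : ℝ)) : ℂ) with hc
    have hexp : ((l:ℂ))⁻¹ • (G i - c • (1 : Matrix (Fin d) (Fin d) ℂ)) *
        (((l:ℂ))⁻¹ • (G j - c • (1 : Matrix (Fin d) (Fin d) ℂ)))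
        = ((l:ℂ))⁻¹ • (((l:ℂ))⁻¹ • (G i * G j
            - c • G i - c • G j
            + (c * c) • (1 : Matrix (Fin d) (Fin d) ℂ))) := by
      simp only [Matrix.smul_mul, Matrix.mul_smul, sub_mul, mul_sub, mul_one, one_mul,
        smul_sub, smul_smul, mul_smul_comm, smul_comm]
      module
    rw [hexp]
    simp only [Matrix.trace_smul, Matrix.trace_add, Matrix.trace_sub, Matrix.trace_smul,
      Matrix.trace_one, htr' i, htr' j, smul_eq_mul, Finset.card_univ, Fintype.card_fin]
    by_cases hij : i = j
    · subst hij
      rw [ha i, if_pos rfl, hcR]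
      field_simp
      linear_combination (d:ℂ)^2 * h4C + (1 - (d:ℂ)^2) * hl2C
    · rw [hb i j hij, if_neg hij, hcR]
      field_simp
      linear_combination hl2C
  · have hc : ∑ i, A i = ((l:ℂ))⁻¹ • ((1 : Matrix (Fin d) (Fin d) ℂ)
        - (d^2 : ℕ) • ((((1 - l) / d ^ 2 : ℝ) : ℂ) • (1 : Matrix (Fin d) (Fin d) ℂ))) := by
      rw [Finset.sum_congr rfl (fun i _ => hA i), ← Finset.smul_sum,
        Finset.sum_sub_distrib, hsum, Finset.sum_const, Finset.card_univ, Fintype.card_fin]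
    rw [hc, ← Nat.cast_smul_eq_nsmul ℂ, smul_smul]
    have h2 : ((d^2 : ℕ) : ℂ) * (((1 - l) / d ^ 2 : ℝ) : ℂ) = 1 - (l:ℂ) := by
      rw [hcR]
      push_cast
      field_simp
    rw [h2]
    have h3 : (1 : Matrix (Fin d) (Fin d) ℂ) - (1 - (l:ℂ)) • 1 = (l:ℂ) • 1 := by
      rw [sub_smul, one_smul]
      abel
    rw [h3, smul_smul, inv_mul_cancel₀ hl0, one_smul]
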